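/- Assume ker(τ) is dense in H. Then for every z ∈ Z_Λ one has ran(R^Λ_z) ∩ dom(A₀) = { u ∈ dom(A₀) : Λ_z(τu) = 0 }. (Since ran(R^Λ_z) is the domain of the self-adjoint operator A_Λ associated with the family Λ, this says dom(A₀) ∩ dom(A_Λ) = {u ∈ dom(A₀) : Λ_z τu = 0}.) -/

import Mathlib

open ContinuousLinearMap in
/-- Equation (2.11) in the proof of Theorem 2.4 of the paper: assuming `ker τ` dense in `H`,
for every `z ∈ Z_Λ` one has
`ran(R^Λ_z) ∩ dom(A₀) = {u ∈ dom(A₀) : Λ_z (τ u) = 0}`,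
where `R^Λ_z = R⁰_z + G_z Λ_z (τ R⁰_z)`, `G_z = (τ R⁰_{z̄})*` and `τ R⁰_z = T z`. -/
theorem statement3
    {H 𝔥 : Type*}
    [NormedAddCommGroup H] [InnerProductSpace ℂ H] [CompleteSpace H]
    [NormedAddCommGroup 𝔥] [InnerProductSpace ℂ 𝔥] [CompleteSpace 𝔥]
    (A0 : H →ₗ.[ℂ] H)
    (hA0dense : Dense (A0.domain : Set H))
    (hA0sa : A0.adjoint = A0)
    (Z : Set ℂ) (hZne : Z.Nonempty) (hZconj : ∀ z ∈ Z, (starRingEnd ℂ) z ∈ Z)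
    (R0 : ℂ → H →L[ℂ] H)
    (hRdom : ∀ z, z ∈ Z → ∀ v : H, R0 z v ∈ A0.domain)
    (hRleft : ∀ z ∈ Z, ∀ u : A0.domain, R0 z (z • (u : H) - A0 u) = u)
    (hRright : ∀ z, ∀ hz : z ∈ Z, ∀ v : H,
      z • R0 z v - A0 ⟨R0 z v, hRdom z hz v⟩ = v)
    (τ : A0.domain →ₗ[ℂ] 𝔥)
    (hτsurj : Function.Surjective τ)
    (hτbdd : ∃ C : ℝ, 0 < C ∧ ∀ u : A0.domain, ‖τ u‖ ≤ C * (‖(u : H)‖ + ‖A0 u‖))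
    (T : ℂ → H →L[ℂ] 𝔥)
    (hT : ∀ z, ∀ hz : z ∈ Z, ∀ v : H, T z v = τ ⟨R0 z v, hRdom z hz v⟩)
    (hker : Dense ((fun u : A0.domain => (u : H)) '' {u | τ u = 0}))
    (ZΛ : Set ℂ) (hZΛsub : ZΛ ⊆ Z) (hZΛne : ZΛ.Nonempty)
    (hZΛconj : ∀ z ∈ ZΛ, (starRingEnd ℂ) z ∈ ZΛ)
    (Λ : ℂ → 𝔥 →L[ℂ] 𝔥)
    (hΛadj : ∀ z ∈ ZΛ, adjoint (Λ z) = Λ ((starRingEnd ℂ) z))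
    (hΛres : ∀ z ∈ ZΛ, ∀ w ∈ ZΛ,
      Λ w - Λ z
        = (z - w) • (Λ w
            ∘L adjoint (adjoint (T ((starRingEnd ℂ) ((starRingEnd ℂ) w))))
            ∘L adjoint (T ((starRingEnd ℂ) z)) ∘L Λ z))
    (RΛ : ℂ → H →L[ℂ] H)
    (hRΛ : ∀ z, RΛ z = R0 z + adjoint (T ((starRingEnd ℂ) z)) ∘L Λ z ∘L T z) :
    ∀ z ∈ ZΛ,
      Set.range (RΛ z) ∩ (A0.domain : Set H)
        = {x : H | ∃ hx : x ∈ A0.domain, Λ z (τ ⟨x, hx⟩) = 0} := by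
  intro z hz
  have hzZ : z ∈ Z := hZΛsub hz
  have hzbZ : (starRingEnd ℂ) z ∈ Z := hZconj z hzZ
  -- symmetry of A0
  have hsym : ∀ x y : A0.domain, inner ℂ (A0 x) (y : H) = (inner ℂ (x : H) (A0 y) : ℂ) := by
    have h := LinearPMap.adjoint_isFormalAdjoint (T := A0) hA0dense
    rw [hA0sa] at h
    exact fun x y => h x y
  -- injectivity of z - A0
  have hinj : ∀ u : A0.domain, z • (u : H) - A0 u = 0 → (u : H) = 0 := by
    intro u hu
    have := hRleft z hzZ u
    rw [hu, map_zero] at this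
    exact this.symm
  -- surjectivity of T z̄
  have hTsurj : Function.Surjective (T ((starRingEnd ℂ) z)) := by
    intro φ
    obtain ⟨u, hu⟩ := hτsurj φ
    refine ⟨(starRingEnd ℂ) z • (u : H) - A0 u, ?_⟩
    rw [hT _ hzbZ]
    have h1 : R0 ((starRingEnd ℂ) z) ((starRingEnd ℂ) z • (u : H) - A0 u) = u :=
      hRleft _ hzbZ u
    have : (⟨R0 ((starRingEnd ℂ) z) ((starRingEnd ℂ) z • (u : H) - A0 u),
        hRdom _ hzbZ _⟩ : A0.domain) = u := Subtype.ext h1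
    rw [this, hu]
  -- injectivity of G z = adjoint (T z̄)
  have hGinj : ∀ φ : 𝔥, ContinuousLinearMap.adjoint (T ((starRingEnd ℂ) z)) φ = 0 → φ = 0 := by
    intro φ hφ
    refine ext_inner_right ℂ fun ψ => ?_
    obtain ⟨v, rfl⟩ := hTsurj ψ
    rw [← ContinuousLinearMap.adjoint_inner_left, hφ, inner_zero_left, inner_zero_left]
  -- range G z ∩ dom A0 = 0
  have hGdom : ∀ φ : 𝔥, ∀ hx : ContinuousLinearMap.adjoint (T ((starRingEnd ℂ) z)) φ ∈ A0.domain,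
      ContinuousLinearMap.adjoint (T ((starRingEnd ℂ) z)) φ = 0 := by
    intro φ hx
    set x : H := ContinuousLinearMap.adjoint (T ((starRingEnd ℂ) z)) φ with hxdef
    have key : ∀ u : A0.domain, τ u = 0 → (inner ℂ (z • x - A0 ⟨x, hx⟩) (u : H) : ℂ) = 0 := by
      intro u hu
      have h1 : (inner ℂ (z • x - A0 ⟨x, hx⟩) (u : H) : ℂ)
          = inner ℂ x ((starRingEnd ℂ) z • (u : H) - A0 u) := by
        rw [inner_sub_left, inner_sub_right, inner_smul_left, inner_smul_right,
          hsym ⟨x, hx⟩ u]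
      rw [h1, hxdef, ContinuousLinearMap.adjoint_inner_left, hT _ hzbZ]
      have h2 : (⟨R0 ((starRingEnd ℂ) z) ((starRingEnd ℂ) z • (u : H) - A0 u),
          hRdom _ hzbZ _⟩ : A0.domain) = u := Subtype.ext (hRleft _ hzbZ u)
      rw [h2, hu, inner_zero_right]
    have hzero : z • x - A0 ⟨x, hx⟩ = 0 := by
      have hcont : Continuous fun v : H => (inner ℂ (z • x - A0 ⟨x, hx⟩) v : ℂ) :=
        continuous_const.inner continuous_id
      have heq : (fun v : H => (inner ℂ (z • x - A0 ⟨x, hx⟩) v : ℂ)) = fun _ => (0 : ℂ) := by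
        refine Continuous.ext_on hker hcont continuous_const ?_
        rintro _ ⟨u, hu, rfl⟩
        exact key u hu
      refine ext_inner_right ℂ fun v => ?_
      rw [congrFun heq v, inner_zero_left]
    exact hinj ⟨x, hx⟩ hzero
  ext x
  simp only [Set.mem_inter_iff, Set.mem_range, SetLike.mem_coe, Set.mem_setOf_eq]
  constructor
  · rintro ⟨⟨v, hv⟩, hx⟩
    rw [hRΛ] at hv
    simp only [ContinuousLinearMap.add_apply, ContinuousLinearMap.comp_apply] at hv
    set φ := Λ z (T z v) with hφdef
    have hGmem : ContinuousLinearMap.adjoint (T ((starRingEnd ℂ) z)) φ ∈ A0.domain := by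
      have : ContinuousLinearMap.adjoint (T ((starRingEnd ℂ) z)) φ = x - R0 z v := by
        rw [← hv]; abel
      rw [this]
      exact A0.domain.sub_mem hx (hRdom z hzZ v)
    have hG0 := hGdom φ hGmem
    have hφ0 : φ = 0 := hGinj φ hG0
    have hxv : x = R0 z v := by rw [← hv, hG0, add_zero]
    refine ⟨hx, ?_⟩
    have : (⟨x, hx⟩ : A0.domain) = ⟨R0 z v, hRdom z hzZ v⟩ := Subtype.ext hxv
    rw [this, ← hT z hzZ v, ← hφdef, hφ0]
  · rintro ⟨hx, hΛ0⟩
    refine ⟨⟨z • x - A0 ⟨x, hx⟩, ?_⟩, hx⟩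
    rw [hRΛ]
    simp only [ContinuousLinearMap.add_apply, ContinuousLinearMap.comp_apply]
    have h1 : R0 z (z • x - A0 ⟨x, hx⟩) = x := hRleft z hzZ ⟨x, hx⟩
    have h2 : T z (z • x - A0 ⟨x, hx⟩) = τ ⟨x, hx⟩ := by
      rw [hT z hzZ]
      exact congrArg τ (Subtype.ext h1)
    rw [h1, h2, hΛ0, map_zero, add_zero]
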